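/- Define a Markov chain (L_i)_{i≥0} on the positive integers as follows: given L_i = ℓ, draw X ~ Binomial(ℓ, 1/2) independently of the past and set L_{i+1} = X if X ≥ 1 and L_{i+1} = ℓ if X = 0. Then the state 1 is absorbing, and for every constant α > 0 there exists a constant C such that for all integers n ≥ 2 and all starting values 1 ≤ L_0 ≤ n, Pr[ L_{⌈C·log n⌉} ≥ 2 ] ≤ n^{−α}. -/

import Mathlib

set_option autoImplicit false

open scoped ENNReal

open Finset

-- Nat identity: ∑ x ≤ n, C(n,x) * x = n * 2^(n-1)
lemma sum_choose_mul_id (n : ℕ) :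
    ∑ x ∈ range (n + 1), n.choose x * x = n * 2 ^ (n - 1) := by
  cases n with
  | zero => simp
  | succ m =>
    rw [Finset.sum_range_succ']
    simp only [Nat.choose_zero_right, Nat.mul_zero, Nat.add_zero]
    have h : ∀ i, (m + 1).choose (i + 1) * (i + 1) = (m + 1) * m.choose i := by
      intro i
      rw [← Nat.add_one_mul_choose_eq]
    calc ∑ i ∈ range (m + 1), (m + 1).choose (i + 1) * (i + 1) + 0
        = ∑ i ∈ range (m + 1), (m + 1) * m.choose i := by
          rw [Nat.add_zero]; exact Finset.sum_congr rfl fun i _ => h i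
      _ = (m + 1) * ∑ i ∈ range (m + 1), m.choose i := by rw [Finset.mul_sum]
      _ = (m + 1) * 2 ^ m := by rw [Nat.sum_range_choose]

-- potential function
noncomputable def phiE (m : ℕ) : ℝ≥0∞ := if m ≤ 1 then 0 else m

noncomputable def Ephi (p : PMF ℕ) : ℝ≥0∞ := ∑' m, p m * phiE m

lemma tsum_pure_mul {β : Type} (a : β) (g : β → ℝ≥0∞) :
    ∑' b, PMF.pure a b * g b = g a := by
  rw [tsum_eq_single a]
  · simp
  · intro b hb; simp [PMF.pure_apply, hb]

lemma tsum_bind_mul {α β : Type} (p : PMF α) (k : α → PMF β) (g : β → ℝ≥0∞) :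
    ∑' b, (p.bind k) b * g b = ∑' a, p a * ∑' b, k a b * g b := by
  simp only [PMF.bind_apply]
  calc ∑' b, (∑' a, p a * (k a) b) * g b
      = ∑' b, ∑' a, p a * (k a) b * g b := by
        congr 1; ext b; rw [← ENNReal.tsum_mul_right]
    _ = ∑' a, ∑' b, p a * (k a) b * g b := ENNReal.tsum_comm
    _ = ∑' a, p a * ∑' b, (k a) b * g b := by
        congr 1; ext a
        rw [← ENNReal.tsum_mul_left]
        congr 1; ext b; ring

lemma tsum_map_mul {α β : Type} (p : PMF α) (f : α → β) (g : β → ℝ≥0∞) :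
    ∑' b, (p.map f) b * g b = ∑' a, p a * g (f a) := by
  have h : p.map f = p.bind (PMF.pure ∘ f) := rfl
  rw [h, tsum_bind_mul]
  exact tsum_congr fun a => by rw [Function.comp_apply, tsum_pure_mul]

lemma Ephi_pure (a : ℕ) : Ephi (PMF.pure a) = phiE a := tsum_pure_mul a phiE

lemma Ephi_bind {α : Type} (p : PMF α) (k : α → PMF ℕ) :
    Ephi (p.bind k) = ∑' a, p a * Ephi (k a) := tsum_bind_mul p k phiE

/-- One round of the leader-elimination chain: from state `ℓ`, draw `X ~ Binomial(ℓ, 1/2)`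
and move to `X` if `X ≥ 1`, and stay at `ℓ` if `X = 0`. -/
noncomputable def leaderKernel (ℓ : ℕ) : PMF ℕ :=
  (PMF.binomial 2⁻¹ (by simp) ℓ).map fun x => if (x : ℕ) = 0 then ℓ else (x : ℕ)

/-- The distribution of the chain after `i` rounds, started at `l0`. -/
noncomputable def leaderChain (l0 : ℕ) : ℕ → PMF ℕ
  | 0 => PMF.pure l0
  | i + 1 => (leaderChain l0 i).bind leaderKernel

-- nat-level potential
def phiN (m : ℕ) : ℕ := if m ≤ 1 then 0 else m

lemma phiE_eq_cast (m : ℕ) : phiE m = (phiN m : ℝ≥0∞) := by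
  unfold phiE phiN; split <;> simp

lemma nat_sum_bound (ℓ : ℕ) (hℓ : 2 ≤ ℓ) :
    ∑ x ∈ range (ℓ + 1), ℓ.choose x * phiN (if x = 0 then ℓ else x) ≤ ℓ * 2 ^ (ℓ - 1) := by
  have key : ∑ x ∈ range (ℓ + 1), ℓ.choose x * phiN (if x = 0 then ℓ else x)
      = ∑ x ∈ range (ℓ + 1), ℓ.choose x * x := by
    obtain ⟨m, rfl⟩ : ∃ m, ℓ = m + 2 := ⟨ℓ - 2, by omega⟩
    rw [show m + 2 + 1 = m + 1 + 1 + 1 from rfl]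
    rw [Finset.sum_range_succ', Finset.sum_range_succ']
    rw [Finset.sum_range_succ' (fun x => (m+2).choose x * x),
        Finset.sum_range_succ' (fun k => (m+2).choose (k+1) * (k+1))]
    have h1 : ∀ i ∈ range (m + 1),
        (m+2).choose (i+1+1) * phiN (if i+1+1 = 0 then m+2 else i+1+1)
        = (m+2).choose (i+1+1) * (i+1+1) := by
      intro i _
      simp [phiN]
    rw [Finset.sum_congr rfl h1]
    simp [phiN]
  rw [key]
  rw [sum_choose_mul_id]

lemma Ephi_kernel (ℓ : ℕ) : Ephi (leaderKernel ℓ) ≤ 2⁻¹ * phiE ℓ := by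
  have hmap : Ephi (leaderKernel ℓ)
      = ∑' x : Fin (ℓ + 1), (PMF.binomial 2⁻¹ (by simp) ℓ) x
          * phiE (if (x : ℕ) = 0 then ℓ else (x : ℕ)) := by
    have hb : (Bind.bind (PMF.binomial 2⁻¹ (by simp) ℓ)
        (fun a => (Pure.pure ((a : ℕ)) : PMF ℕ)))
        = @PMF.map (Fin (ℓ + 1)) ℕ (fun a => (a : ℕ))
            (PMF.binomial 2⁻¹ (by simp) ℓ) := rfl
    unfold Ephi leaderKernel
    rw [tsum_map_mul, hb, tsum_map_mul]
  rw [hmap, tsum_fintype]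
  have hw : ∀ x : Fin (ℓ + 1), (PMF.binomial 2⁻¹ (by simp) ℓ) x
      = 2⁻¹ ^ ℓ * (ℓ.choose x : ℝ≥0∞) := by
    intro x
    rw [PMF.binomial_apply, ENNReal.coe_inv_two, ENNReal.one_sub_inv_two]
    rw [Fin.val_last, ← pow_add, Nat.add_sub_cancel' x.is_le]
  simp only [hw]
  by_cases hℓ : ℓ ≤ 1
  · have h0 : ∀ x : Fin (ℓ + 1), phiE (if (x : ℕ) = 0 then ℓ else (x : ℕ)) = 0 := by
      intro x
      unfold phiE
      have := x.is_le
      split <;> simp_all <;> omega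
    simp only [h0, mul_zero, Finset.sum_const_zero, zero_le]
  · push_neg at hℓ
    have hphi : phiE ℓ = (ℓ : ℝ≥0∞) := by unfold phiE; rw [if_neg (by omega)]
    calc ∑ x : Fin (ℓ + 1), 2⁻¹ ^ ℓ * (ℓ.choose x : ℝ≥0∞)
          * phiE (if (x : ℕ) = 0 then ℓ else (x : ℕ))
        = 2⁻¹ ^ ℓ * ((∑ x ∈ range (ℓ + 1),
            ℓ.choose x * phiN (if x = 0 then ℓ else x) : ℕ) : ℝ≥0∞) := by
          rw [Fin.sum_univ_eq_sum_range
            (fun x => 2⁻¹ ^ ℓ * (ℓ.choose x : ℝ≥0∞) * phiE (if x = 0 then ℓ else x)) (ℓ+1)]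
          push_cast
          rw [Finset.mul_sum]
          exact Finset.sum_congr rfl fun x _ => by rw [phiE_eq_cast]; push_cast; ring
      _ ≤ 2⁻¹ ^ ℓ * ((ℓ * 2 ^ (ℓ - 1) : ℕ) : ℝ≥0∞) := by
          gcongr
          exact_mod_cast nat_sum_bound ℓ hℓ
      _ = 2⁻¹ * phiE ℓ := by
          push_cast
          rw [hphi]
          obtain ⟨m, rfl⟩ : ∃ m, ℓ = m + 1 := ⟨ℓ - 1, by omega⟩
          have hone : (2⁻¹ : ℝ≥0∞) ^ m * 2 ^ m = 1 := by
            rw [← mul_pow, ENNReal.inv_mul_cancel (by norm_num) (by norm_num), one_pow]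
          rw [show m + 1 - 1 = m from rfl, pow_succ]
          push_cast
          calc (2⁻¹:ℝ≥0∞) ^ m * 2⁻¹ * (((m:ℝ≥0∞) + 1) * 2 ^ m)
              = (2⁻¹:ℝ≥0∞) ^ m * 2 ^ m * (2⁻¹ * ((m:ℝ≥0∞) + 1)) := by ring
            _ = 2⁻¹ * ((m:ℝ≥0∞) + 1) := by rw [hone, one_mul]

lemma Ephi_chain (l0 : ℕ) (i : ℕ) : Ephi (leaderChain l0 i) ≤ 2⁻¹ ^ i * phiE l0 := by
  induction i with
  | zero =>
    rw [show leaderChain l0 0 = PMF.pure l0 from rfl, Ephi_pure, pow_zero, one_mul]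
  | succ i ih =>
    rw [show leaderChain l0 (i + 1) = (leaderChain l0 i).bind leaderKernel from rfl, Ephi_bind]
    calc ∑' a, (leaderChain l0 i) a * Ephi (leaderKernel a)
        ≤ ∑' a, (leaderChain l0 i) a * (2⁻¹ * phiE a) :=
          ENNReal.tsum_le_tsum fun a => mul_le_mul_right (Ephi_kernel a) _
      _ = 2⁻¹ * Ephi (leaderChain l0 i) := by
          unfold Ephi
          rw [← ENNReal.tsum_mul_left]
          exact tsum_congr fun a => by ring
      _ ≤ 2⁻¹ * (2⁻¹ ^ i * phiE l0) := mul_le_mul_right ih _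
      _ = 2⁻¹ ^ (i + 1) * phiE l0 := by rw [pow_succ]; ring

lemma markov_phi (p : PMF ℕ) : p.toOuterMeasure {ℓ | 2 ≤ ℓ} ≤ Ephi p := by
  rw [PMF.toOuterMeasure_apply]
  refine ENNReal.tsum_le_tsum fun m => ?_
  by_cases hm : m ∈ {ℓ : ℕ | 2 ≤ ℓ}
  · rw [Set.indicator_of_mem hm]
    have h1 : (1 : ℝ≥0∞) ≤ phiE m := by
      have hm2 : 2 ≤ m := hm
      unfold phiE
      rw [if_neg (by omega)]
      exact_mod_cast Nat.one_le_cast.mpr (by omega)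
    calc p m = p m * 1 := (mul_one _).symm
      _ ≤ p m * phiE m := mul_le_mul_right h1 _
  · rw [Set.indicator_of_notMem hm]
    exact zero_le

lemma kernel_one : leaderKernel 1 = PMF.pure 1 := by
  have hb : (Bind.bind (PMF.binomial 2⁻¹ (by simp) 1)
      (fun a => (Pure.pure ((a : ℕ)) : PMF ℕ)))
      = @PMF.map (Fin 2) ℕ (fun a => (a : ℕ))
          (PMF.binomial 2⁻¹ (by simp) 1) := rfl
  unfold leaderKernel
  rw [hb, PMF.map_comp]
  ext m
  rw [PMF.map_apply, tsum_fintype, Fin.sum_univ_two]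
  by_cases hm : m = 1
  · subst hm
    rw [if_pos (by norm_num [Function.comp]), if_pos (by norm_num [Function.comp])]
    rw [PMF.pure_apply, if_pos rfl]
    rw [show ((0 : Fin 2)) = (0 : Fin 2) from rfl]
    rw [PMF.binomial_apply_zero, show ((1 : Fin 2)) = Fin.last 1 from rfl,
      PMF.binomial_apply_last, ENNReal.coe_inv_two, ENNReal.one_sub_inv_two]
    simp [ENNReal.inv_two_add_inv_two]
  · rw [if_neg (by simp [Function.comp, hm]), if_neg (by simp [Function.comp, hm])]
    rw [PMF.pure_apply, if_neg hm, add_zero]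

/-- In the leader-elimination Markov chain, state `1` is absorbing, and
for every `α > 0` there is a constant `C` such that for all `n ≥ 2` and all starting values
`1 ≤ L_0 ≤ n`, the probability that after `⌈C·log n⌉` rounds at least two leaders remain is
at most `n^{−α}`. -/
theorem leader_chain_absorbs_quickly :
    leaderKernel 1 = PMF.pure 1 ∧
      ∀ α : ℝ, 0 < α → ∃ C : ℝ, 0 < C ∧
        ∀ n : ℕ, 2 ≤ n → ∀ l0 : ℕ, 1 ≤ l0 → l0 ≤ n →
          (leaderChain l0 ⌈C * Real.log n⌉₊).toOuterMeasure {ℓ | 2 ≤ ℓ} ≤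
            ENNReal.ofReal ((n : ℝ) ^ (-α)) := by
  refine ⟨kernel_one, ?_⟩
  intro α hα
  have hlog2 : 0 < Real.log 2 := Real.log_pos one_lt_two
  refine ⟨(α + 1) / Real.log 2 + 1, by positivity, ?_⟩
  intro n hn l0 hl0 hl0n
  set C : ℝ := (α + 1) / Real.log 2 + 1 with hC
  set t : ℕ := ⌈C * Real.log n⌉₊ with ht
  have hn1 : (1 : ℝ) < n := by exact_mod_cast Nat.lt_of_lt_of_le one_lt_two hn
  have hnpos : (0 : ℝ) < n := lt_trans one_pos hn1
  have hlogn : 0 < Real.log n := Real.log_pos hn1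
  have hts : C * Real.log n ≤ (t : ℝ) := Nat.le_ceil _
  -- step 1: measure bound via potential
  have hb1 : (leaderChain l0 t).toOuterMeasure {ℓ | 2 ≤ ℓ} ≤ 2⁻¹ ^ t * (n : ℝ≥0∞) := by
    refine le_trans (markov_phi _) (le_trans (Ephi_chain l0 t) ?_)
    gcongr
    unfold phiE
    split
    · exact zero_le
    · exact_mod_cast Nat.cast_le.mpr hl0n
  refine le_trans hb1 ?_
  -- step 2: real-number estimate
  have hexp : (α + 1) * Real.log n ≤ (t : ℝ) * Real.log 2 := by
    have h1 : (α + 1) / Real.log 2 * Real.log n ≤ C * Real.log n := by nlinarith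
    have h2 : (α + 1) / Real.log 2 * Real.log n * Real.log 2 = (α + 1) * Real.log n := by
      field_simp
    nlinarith [mul_le_mul_of_nonneg_right (le_trans h1 hts) hlog2.le]
  have hpow : (n : ℝ) ^ (α + 1) ≤ (2 : ℝ) ^ (t : ℝ) := by
    rw [Real.rpow_def_of_pos hnpos, Real.rpow_def_of_pos two_pos]
    exact Real.exp_le_exp.mpr (by rw [mul_comm (Real.log n), mul_comm (Real.log 2)]; exact hexp)
  have key : (2⁻¹ : ℝ) ^ t * n ≤ (n : ℝ) ^ (-α) := by
    have h2t : (0 : ℝ) < 2 ^ t := by positivity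
    rw [inv_pow, inv_mul_le_iff₀ h2t]
    have hsplit : (n : ℝ) = (n : ℝ) ^ (α + 1) * (n : ℝ) ^ (-α) := by
      rw [← Real.rpow_add hnpos]
      norm_num
    calc (n : ℝ) = (n : ℝ) ^ (α + 1) * (n : ℝ) ^ (-α) := hsplit
      _ ≤ (2 : ℝ) ^ (t : ℝ) * (n : ℝ) ^ (-α) :=
          mul_le_mul_of_nonneg_right hpow (Real.rpow_nonneg hnpos.le _)
      _ = 2 ^ t * (n : ℝ) ^ (-α) := by rw [Real.rpow_natCast]
  calc (2⁻¹ : ℝ≥0∞) ^ t * (n : ℝ≥0∞)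
      = ENNReal.ofReal ((2⁻¹ : ℝ) ^ t * n) := by
        rw [ENNReal.ofReal_mul (by positivity), ENNReal.ofReal_pow (by norm_num),
          ENNReal.ofReal_natCast, ENNReal.ofReal_inv_of_pos two_pos, ENNReal.ofReal_ofNat]
    _ ≤ ENNReal.ofReal ((n : ℝ) ^ (-α)) := ENNReal.ofReal_le_ofReal key
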